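/- Let q be a prime power such that p = q^2 + q + 1 is prime, let F = GF(p), let R = {(a, a^2) : a ∈ F}, and let S ⊆ F be a perfect difference set modulo p. Define the graph Γ on vertex set F × F where distinct vertices (a,b), (c,d) are adjacent iff (a+c, b+d) ∈ R, or (a = c and b + d ∈ S). Then Γ has diameter at most 2. -/

import Mathlib

def IsPerfectDifferenceSet {n : ℕ} (S : Finset (ZMod n)) : Prop :=
  ∀ d : ZMod n, d ≠ 0 →
    ∃! p : ZMod n × ZMod n, p.1 ∈ S ∧ p.2 ∈ S ∧ p.1 - p.2 = d

/-- The combined graph on `F × F`: distinct vertices are adjacent iff their sum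
lies on the parabola `{(a, a²)}`, or they have equal first coordinates and the
sum of their second coordinates lies in `S`. -/
def combinedGraph (p : ℕ) (S : Finset (ZMod p)) : SimpleGraph (ZMod p × ZMod p) where
  Adj x y := x ≠ y ∧ (x.2 + y.2 = (x.1 + y.1) ^ 2 ∨ (x.1 = y.1 ∧ x.2 + y.2 ∈ S))
  symm := ⟨fun x y ⟨h1, h2⟩ => by
    refine ⟨h1.symm, ?_⟩
    rcases h2 with h2 | ⟨h2, h3⟩
    · left; rw [add_comm y.2, add_comm y.1]; exact h2
    · right; exact ⟨h2.symm, by rwa [add_comm]⟩⟩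
  loopless := ⟨fun x ⟨h, _⟩ => h rfl⟩

theorem combinedGraph_diameter_le_two (q : ℕ) (hq : IsPrimePow q)
    (hp : (q ^ 2 + q + 1).Prime) (S : Finset (ZMod (q ^ 2 + q + 1)))
    (hS : IsPerfectDifferenceSet S) :
    ∀ x y : ZMod (q ^ 2 + q + 1) × ZMod (q ^ 2 + q + 1), x ≠ y →
      (combinedGraph (q ^ 2 + q + 1) S).Adj x y ∨
        ∃ z, (combinedGraph (q ^ 2 + q + 1) S).Adj x z ∧
          (combinedGraph (q ^ 2 + q + 1) S).Adj z y := by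
  intro x y hxy
  haveI : Fact (q ^ 2 + q + 1).Prime := ⟨hp⟩
  have h2 : (2 : ZMod (q ^ 2 + q + 1)) ≠ 0 := by
    have hq2 : 2 ≤ q := hq.two_le
    intro h
    have hdvd : (q ^ 2 + q + 1) ∣ 2 := by
      have := (ZMod.natCast_eq_zero_iff 2 (q ^ 2 + q + 1)).mp (by exact_mod_cast h)
      exact this
    have := Nat.le_of_dvd (by norm_num) hdvd
    nlinarith
  by_cases hadj : (combinedGraph (q ^ 2 + q + 1) S).Adj x y
  · exact Or.inl hadj
  right
  dsimp only [combinedGraph] at hadj ⊢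
  obtain ⟨a, b⟩ := x
  obtain ⟨c, d⟩ := y
  by_cases hac : a = c
  · -- same first coordinate: use the perfect difference set
    subst hac
    have hbd : b ≠ d := fun h => hxy (by rw [h])
    obtain ⟨⟨s1, s2⟩, ⟨hs1, hs2, hdiff⟩, -⟩ := hS (b - d) (sub_ne_zero.mpr hbd)
    have key2 : (s1 - b) + d = s2 := by linear_combination hdiff
    refine ⟨(a, s1 - b), ⟨?_, Or.inr ⟨rfl, ?_⟩⟩, ⟨?_, Or.inr ⟨rfl, ?_⟩⟩⟩
    · intro h
      apply hadj
      have hb : b = s1 - b := congrArg Prod.snd h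
      refine ⟨hxy, Or.inr ⟨rfl, ?_⟩⟩
      show b + d ∈ S
      rw [hb, key2]; exact hs2
    · show b + (s1 - b) ∈ S
      have : b + (s1 - b) = s1 := by ring
      rw [this]; exact hs1
    · intro h
      apply hadj
      have hd : s1 - b = d := congrArg Prod.snd h
      refine ⟨hxy, Or.inr ⟨rfl, ?_⟩⟩
      show b + d ∈ S
      have : b + d = s1 := by linear_combination -hd
      rw [this]; exact hs1
    · show (s1 - b) + d ∈ S
      rw [key2]; exact hs2
  · -- different first coordinates: common parabola neighbor
    have hac' : a - c ≠ 0 := sub_ne_zero.mpr hac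
    set e : ZMod (q ^ 2 + q + 1) := ((b - d) * (a - c)⁻¹ - a - c) * 2⁻¹ with he
    set f : ZMod (q ^ 2 + q + 1) := (a + e) ^ 2 - b with hf
    have key : f + d = (c + e) ^ 2 := by
      rw [hf, he]
      field_simp
      ring
    refine ⟨(e, f), ⟨?_, Or.inl ?_⟩, ⟨?_, Or.inl ?_⟩⟩
    · intro h
      apply hadj
      have ha : a = e := congrArg Prod.fst h
      have hb : b = f := congrArg Prod.snd h
      refine ⟨hxy, Or.inl ?_⟩
      show b + d = (a + c) ^ 2
      rw [hb, ha, key]; ring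
    · show b + f = (a + e) ^ 2
      rw [hf]; ring
    · intro h
      apply hadj
      have hec : e = c := congrArg Prod.fst h
      have hfd : f = d := congrArg Prod.snd h
      refine ⟨hxy, Or.inl ?_⟩
      show b + d = (a + c) ^ 2
      rw [← hfd, ← hec, hf]; ring
    · show f + d = (e + c) ^ 2
      rw [key]; ring
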